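/- Every sharply orthocomplete Archimedean atomic MV-effect algebra E is a complete lattice; indeed E is isomorphic to the direct product ∏_{a ∈ A} [0, n_a a] over the set A of atoms of E, where n_a = ord(a). -/

import Mathlib

universe u v

/-- An effect algebra: a partial algebra `(E; ⊕, 0, 1)` with `0 ≠ 1`, where `⊕` is
partially defined (domain `D`), commutative and associative where defined, every
element has a unique orthosupplement (`compl`, skolemizing axiom (Eiii)), and
`1 ⊕ x` defined implies `x = 0`. -/
structure EffectAlgebra (E : Type u) where
  D : E → E → Prop
  oplus : E → E → E
  zero : E
  one : E
  zero_ne_one : zero ≠ one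
  D_comm : ∀ x y, D x y → D y x
  oplus_comm : ∀ x y, D x y → oplus x y = oplus y x
  assoc : ∀ x y z, D x y → D (oplus x y) z →
      D y z ∧ D x (oplus y z) ∧ oplus (oplus x y) z = oplus x (oplus y z)
  assoc' : ∀ x y z, D y z → D x (oplus y z) →
      D x y ∧ D (oplus x y) z ∧ oplus (oplus x y) z = oplus x (oplus y z)
  compl : E → E
  D_compl : ∀ x, D x (compl x)
  oplus_compl : ∀ x, oplus x (compl x) = one
  compl_unique : ∀ x y, D x y → oplus x y = one → y = compl x
  one_max : ∀ x, D one x → x = zero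

namespace EffectAlgebra

variable {E : Type u} (A : EffectAlgebra E)

/-- The induced order: `x ≤ y` iff `x ⊕ z = y` for some `z`. -/
def le (x y : E) : Prop := ∃ z, A.D x z ∧ A.oplus x z = y

def IsLB (S : Set E) (m : E) : Prop := ∀ x ∈ S, A.le m x
def IsUB (S : Set E) (m : E) : Prop := ∀ x ∈ S, A.le x m

/-- `m` is the infimum of `S` computed within the subposet `P`. -/
def IsInfIn (P : Set E) (S : Set E) (m : E) : Prop :=
  m ∈ P ∧ A.IsLB S m ∧ ∀ z ∈ P, A.IsLB S z → A.le z m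

/-- `m` is the supremum of `S` computed within the subposet `P`. -/
def IsSupIn (P : Set E) (S : Set E) (m : E) : Prop :=
  m ∈ P ∧ A.IsUB S m ∧ ∀ z ∈ P, A.IsUB S z → A.le m z

/-- `w` is sharp iff the meet `w ∧ w'` exists in `E` and equals `0`. -/
def Sharp (w : E) : Prop := A.IsInfIn Set.univ {w, A.compl w} A.zero

/-- The set `S(E)` of sharp elements. -/
def sharpSet : Set E := {w | A.Sharp w}

def HasMeet (x y : E) : Prop := ∃ m, A.IsInfIn Set.univ {x, y} m
def HasJoin (x y : E) : Prop := ∃ j, A.IsSupIn Set.univ {x, y} j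

/-- Every `x` has a least sharp element above it, which is the infimum of the sharp
elements above `x` both in `E` and in `S(E)`. -/
def SharplyDominating : Prop :=
  ∀ x : E, ∃ w, A.Sharp w ∧ A.le x w ∧
    A.IsInfIn Set.univ {v | A.Sharp v ∧ A.le x v} w ∧
    A.IsInfIn A.sharpSet {v | A.Sharp v ∧ A.le x v} w

/-- Sharply dominating, and `x ∧ w` exists for every `x ∈ E`, `w ∈ S(E)`. -/
def SDominating : Prop :=
  A.SharplyDominating ∧ ∀ x w : E, A.Sharp w → A.HasMeet x w

end EffectAlgebra

/-- `SumDef A l s` : the orthosum of the finite list `l` is defined and equals `s`. -/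
inductive EffectAlgebra.SumDef {E : Type u} (A : EffectAlgebra E) : List E → E → Prop
  | nil : EffectAlgebra.SumDef A [] A.zero
  | cons {x : E} {l : List E} {s : E} : EffectAlgebra.SumDef A l s → A.D x s →
      EffectAlgebra.SumDef A (x :: l) (A.oplus x s)

namespace EffectAlgebra

variable {E : Type u} (A : EffectAlgebra E)

/-- A family is orthogonal iff every finite subfamily has a defined orthosum. -/
def Orthogonal {ι : Type v} (x : ι → E) : Prop :=
  ∀ l : List ι, l.Nodup → ∃ s, A.SumDef (l.map x) s

/-- The set of finite partial orthosums of a family. -/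
def finiteSums {ι : Type v} (x : ι → E) : Set E :=
  {s | ∃ l : List ι, l.Nodup ∧ A.SumDef (l.map x) s}

/-- `v = ⊕ x` : the family is orthogonal and `v` is the supremum in `E` of all
finite partial orthosums. -/
def HasOrthoSum {ι : Type v} (x : ι → E) (v : E) : Prop :=
  A.Orthogonal x ∧ A.IsSupIn Set.univ (A.finiteSums x) v

/-- Every family dominated elementwise by an orthogonal family of sharp
elements has an orthosum. -/
def SharplyOrthocomplete : Prop :=
  ∀ (ι : Type u) (x w : ι → E), (∀ k, A.Sharp (w k)) → A.Orthogonal w →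
    (∀ k, A.le (x k) (w k)) → ∃ v, A.HasOrthoSum x v

/-- `c` is central: for every `y` the meets `y ∧ c`, `y ∧ c'` exist and
`y = (y ∧ c) ∨ (y ∧ c')`. -/
def Central (c : E) : Prop :=
  ∀ y : E, ∃ m₁ m₂, A.IsInfIn Set.univ {y, c} m₁ ∧
    A.IsInfIn Set.univ {y, A.compl c} m₂ ∧ A.IsSupIn Set.univ {m₁, m₂} y

/-- The center `C(E)`. -/
def centerSet : Set E := {c | A.Central c}

def CentrallyDominating : Prop :=
  ∀ x : E, ∃ c, A.Central c ∧ A.le x c ∧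
    A.IsInfIn Set.univ {d | A.Central d ∧ A.le x d} c ∧
    A.IsInfIn A.centerSet {d | A.Central d ∧ A.le x d} c

def CentrallyOrthocomplete : Prop :=
  ∀ (ι : Type u) (x c : ι → E), (∀ k, A.Central (c k)) → A.Orthogonal c →
    (∀ k, A.le (x k) (c k)) → ∃ v, A.HasOrthoSum x v

/-- `P` is bifull in `E`: for `S ⊆ P`, the join of `S` in `P` exists iff the join
of `S` in `E` exists, and then they coincide. -/
def Bifull (P : Set E) : Prop :=
  ∀ S ⊆ P, (∀ s, A.IsSupIn P S s → A.IsSupIn Set.univ S s) ∧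
    (∀ s, A.IsSupIn Set.univ S s → A.IsSupIn P S s)

/-- The subposet `P` is a complete lattice: every subset of `P` has a supremum
(and an infimum) computed within `P`. -/
def CompleteIn (P : Set E) : Prop :=
  ∀ S ⊆ P, (∃ s, A.IsSupIn P S s) ∧ (∃ m, A.IsInfIn P S m)

/-- `E` is a complete lattice. -/
def Complete : Prop :=
  ∀ S : Set E, (∃ s, A.IsSupIn Set.univ S s) ∧ (∃ m, A.IsInfIn Set.univ S m)

/-- The induced order of `E` is a lattice. -/
def LatticeOrdered : Prop := ∀ x y : E, A.HasMeet x y ∧ A.HasJoin x y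

/-- `x ↔ y` : `x ∨ y = x ⊕ (y ⊖ (x ∧ y))`. -/
def Compatible (x y : E) : Prop :=
  ∃ m j z, A.IsInfIn Set.univ {x, y} m ∧ A.IsSupIn Set.univ {x, y} j ∧
    A.D m z ∧ A.oplus m z = y ∧ A.D x z ∧ A.oplus x z = j

/-- An MV-effect algebra: a lattice effect algebra all of whose pairs of elements
are compatible. -/
def MV : Prop := A.LatticeOrdered ∧ ∀ x y : E, A.Compatible x y

/-- `nx = x ⊕ ⋯ ⊕ x` (`n` times) is defined. -/
def nTimesDef (n : ℕ) (x : E) : Prop := ∃ s, A.SumDef (List.replicate n x) s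

/-- `ord x < ∞` for every nonzero `x`. -/
def IsArchimedean : Prop := ∀ x : E, x ≠ A.zero → ∃ n : ℕ, ¬ A.nTimesDef n x

def Atom (a : E) : Prop := a ≠ A.zero ∧ ∀ b, A.le b a → b = A.zero ∨ b = a

def Atomic : Prop := ∀ x : E, x ≠ A.zero → ∃ a, A.Atom a ∧ A.le a x

/-- The subposet `P` (closed under `'`) is an orthomodular lattice. -/
def OrthomodularIn (P : Set E) : Prop :=
  (∀ x ∈ P, ∀ y ∈ P, (∃ m, A.IsInfIn P {x, y} m) ∧ (∃ j, A.IsSupIn P {x, y} j)) ∧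
  A.zero ∈ P ∧ A.one ∈ P ∧ (∀ x ∈ P, A.compl x ∈ P) ∧
  (∀ x ∈ P, A.IsInfIn P {x, A.compl x} A.zero ∧ A.IsSupIn P {x, A.compl x} A.one) ∧
  (∀ x ∈ P, ∀ y ∈ P, A.le x y →
    ∃ m, A.IsInfIn P {y, A.compl x} m ∧ A.IsSupIn P {x, m} y)

def DistributiveIn (P : Set E) : Prop :=
  ∀ x ∈ P, ∀ y ∈ P, ∀ z ∈ P, ∀ jyz mxy mxz m : E,
    A.IsSupIn P {y, z} jyz → A.IsInfIn P {x, y} mxy → A.IsInfIn P {x, z} mxz →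
    A.IsInfIn P {x, jyz} m → A.IsSupIn P {mxy, mxz} m

/-- The subposet `P` is a Boolean algebra (complemented distributive lattice with
bounds, complement given by `'`). -/
def BooleanIn (P : Set E) : Prop :=
  (∀ x ∈ P, ∀ y ∈ P, (∃ m, A.IsInfIn P {x, y} m) ∧ (∃ j, A.IsSupIn P {x, y} j)) ∧
  A.zero ∈ P ∧ A.one ∈ P ∧ (∀ x ∈ P, A.compl x ∈ P) ∧
  (∀ x ∈ P, A.IsInfIn P {x, A.compl x} A.zero ∧ A.IsSupIn P {x, A.compl x} A.one) ∧
  A.DistributiveIn P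

/-- A block: a maximal set of pairwise compatible elements. -/
def Block (M : Set E) : Prop :=
  (∀ x ∈ M, ∀ y ∈ M, A.Compatible x y) ∧
  ∀ N : Set E, M ⊆ N → (∀ x ∈ N, ∀ y ∈ N, A.Compatible x y) → N = M

def AtomIn (M : Set E) (a : E) : Prop :=
  a ∈ M ∧ a ≠ A.zero ∧ ∀ b ∈ M, A.le b a → b = A.zero ∨ b = a

def AtomicIn (M : Set E) : Prop :=
  ∀ x ∈ M, x ≠ A.zero → ∃ a, A.AtomIn M a ∧ A.le a x

end EffectAlgebra

namespace EffectAlgebra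

variable {E : Type u} (A : EffectAlgebra E)

lemma compl_one : A.compl A.one = A.zero :=
  A.one_max _ (A.D_compl A.one)

lemma D_one_zero : A.D A.one A.zero := by
  have := A.D_compl A.one; rwa [compl_one] at this

lemma oplus_one_zero : A.oplus A.one A.zero = A.one := by
  have := A.oplus_compl A.one; rwa [compl_one] at this

lemma compl_oplus_zero (x : E) : A.D (A.compl x) A.zero ∧ A.oplus (A.compl x) A.zero = A.compl x := by
  have h1 := A.D_compl x
  have h2 : A.D (A.oplus x (A.compl x)) A.zero := by rw [A.oplus_compl x]; exact A.D_one_zero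
  obtain ⟨hd, hd2, he⟩ := A.assoc x (A.compl x) A.zero h1 h2
  refine ⟨hd, ?_⟩
  have : A.oplus x (A.oplus (A.compl x) A.zero) = A.one := by
    rw [← he, A.oplus_compl x, A.oplus_one_zero]
  exact A.compl_unique x _ hd2 this

lemma compl_compl (x : E) : A.compl (A.compl x) = x := by
  have h1 := A.D_comm _ _ (A.D_compl x)
  have h2 : A.oplus (A.compl x) x = A.one := by
    rw [A.oplus_comm _ _ h1, A.oplus_compl]
  exact (A.compl_unique _ _ h1 h2).symm

lemma D_zero (x : E) : A.D x A.zero := by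
  have := (A.compl_oplus_zero (A.compl x)).1; rwa [A.compl_compl] at this

lemma D_zero' (x : E) : A.D A.zero x := A.D_comm _ _ (A.D_zero x)

lemma oplus_zero (x : E) : A.oplus x A.zero = x := by
  have := (A.compl_oplus_zero (A.compl x)).2; rwa [A.compl_compl] at this

lemma zero_oplus (x : E) : A.oplus A.zero x = x := by
  rw [A.oplus_comm _ _ (A.D_zero' x), A.oplus_zero]

lemma le_refl (x : E) : A.le x x := ⟨A.zero, A.D_zero x, A.oplus_zero x⟩

lemma zero_le (x : E) : A.le A.zero x := ⟨x, A.D_zero' x, A.zero_oplus x⟩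

lemma le_one (x : E) : A.le x A.one := ⟨A.compl x, A.D_compl x, A.oplus_compl x⟩

variable {A}

lemma cancel {x u v : E} (hu : A.D x u) (hv : A.D x v) (h : A.oplus x u = A.oplus x v) : u = v := by
  set d := A.compl (A.oplus x u) with hd
  have hdd : A.D (A.oplus x u) d := A.D_compl _
  have key : ∀ w, A.D x w → A.oplus x w = A.oplus x u → w = A.compl (A.oplus d x) := by
    intro w hw hwe
    have hdd' : A.D (A.oplus x w) d := by rw [hwe]; exact hdd
    obtain ⟨h1, h2, h3⟩ := A.assoc x w d hw hdd'
    have hx1 : A.oplus x (A.oplus w d) = A.one := by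
      rw [← h3, hwe, hd, A.oplus_compl]
    have hwd : A.oplus w d = A.compl x := A.compl_unique x _ h2 hx1
    have hDwd_x : A.D (A.oplus w d) x := by
      rw [hwd]; exact A.D_comm _ _ (A.D_compl x)
    obtain ⟨g1, g2, g3⟩ := A.assoc w d x h1 hDwd_x
    have : A.oplus w (A.oplus d x) = A.one := by
      rw [← g3, hwd, A.oplus_comm _ _ (A.D_comm _ _ (A.D_compl x)), A.oplus_compl]
    have := A.compl_unique w _ g2 this
    calc w = A.compl (A.compl w) := (A.compl_compl w).symm
    _ = A.compl (A.oplus d x) := by rw [← this]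
  rw [key u hu rfl, key v hv h.symm]

lemma le_trans {x y z : E} (h1 : A.le x y) (h2 : A.le y z) : A.le x z := by
  obtain ⟨u, hu, hue⟩ := h1
  obtain ⟨v, hv, hve⟩ := h2
  rw [← hue] at hv hve
  obtain ⟨h1', h2', h3'⟩ := A.assoc x u v hu hv
  exact ⟨A.oplus u v, h2', by rw [← h3', hve]⟩

lemma oplus_le_cancel_left {x u v : E} (hu : A.D x u) (hv : A.D x v)
    (h : A.le (A.oplus x u) (A.oplus x v)) : A.le u v := by
  obtain ⟨e, he, hee⟩ := h
  obtain ⟨h1, h2, h3⟩ := A.assoc x u e hu he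
  rw [h3] at hee
  exact ⟨e, h1, cancel h2 hv hee⟩

lemma oplus_eq_zero {x y : E} (hd : A.D x y) (h : A.oplus x y = A.zero) :
    x = A.zero ∧ y = A.zero := by
  have hc0 : A.compl A.zero = A.one :=
    (A.compl_unique A.zero A.one (A.D_zero' A.one) (A.zero_oplus A.one)).symm
  have hD1 : A.D (A.oplus x y) A.one := by rw [h, ← hc0]; exact A.D_compl A.zero
  obtain ⟨h1, _, _⟩ := A.assoc x y A.one hd hD1
  have hy : y = A.zero := A.one_max y (A.D_comm _ _ h1)
  rw [hy, A.oplus_zero] at h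
  exact ⟨h, hy⟩

lemma le_antisymm {x y : E} (h1 : A.le x y) (h2 : A.le y x) : x = y := by
  obtain ⟨u, hu, hue⟩ := h1
  obtain ⟨v, hv, hve⟩ := h2
  rw [← hue] at hv hve
  obtain ⟨g1, g2, g3⟩ := A.assoc x u v hu hv
  rw [g3] at hve
  have hx : A.oplus x (A.oplus u v) = A.oplus x A.zero := by rw [A.oplus_zero, hve]
  have huv : A.oplus u v = A.zero := cancel g2 (A.D_zero x) hx
  have hu0 : u = A.zero := (oplus_eq_zero g1 huv).1
  rw [← hue, hu0, A.oplus_zero]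

lemma le_zero {x : E} (h : A.le x A.zero) : x = A.zero := le_antisymm h (A.zero_le x)

lemma D_iff_le_compl {x y : E} : A.D x y ↔ A.le y (A.compl x) := by
  constructor
  · intro h
    have hdd : A.D (A.oplus x y) (A.compl (A.oplus x y)) := A.D_compl _
    obtain ⟨h1, h2, h3⟩ := A.assoc x y _ h hdd
    have : A.oplus x (A.oplus y (A.compl (A.oplus x y))) = A.one := by
      rw [← h3, A.oplus_compl]
    exact ⟨_, h1, A.compl_unique x _ h2 this⟩
  · rintro ⟨u, hu, hue⟩
    have hx : A.D x (A.oplus y u) := by rw [hue]; exact A.D_compl x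
    exact (A.assoc' x y u hu hx).1

lemma compl_le_compl {x y : E} (h : A.le x y) : A.le (A.compl y) (A.compl x) := by
  have h1 : A.D (A.compl y) x := by
    refine D_iff_le_compl.mpr ?_
    rw [A.compl_compl]; exact h
  exact D_iff_le_compl.mp (A.D_comm _ _ h1)

lemma le_compl_iff {x y : E} : A.le x (A.compl y) ↔ A.le y (A.compl x) :=
  ⟨fun h => D_iff_le_compl.mp (A.D_comm _ _ (D_iff_le_compl.mpr h)),
   fun h => D_iff_le_compl.mp (A.D_comm _ _ (D_iff_le_compl.mpr h))⟩

lemma D_of_le_le {x y u v : E} (hx : A.le x u) (hy : A.le y v) (h : A.D u v) : A.D x y := by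
  rw [D_iff_le_compl] at h ⊢
  exact le_trans hy (le_trans h (compl_le_compl hx))

lemma le_oplus_left {x y : E} (h : A.D x y) : A.le x (A.oplus x y) := ⟨y, h, rfl⟩

lemma le_oplus_right {x y : E} (h : A.D x y) : A.le y (A.oplus x y) :=
  ⟨x, A.D_comm _ _ h, by rw [A.oplus_comm _ _ (A.D_comm _ _ h)]⟩

lemma oplus_le_oplus_right {x u v : E} (h : A.le u v) (hv : A.D x v) :
    A.D x u ∧ A.le (A.oplus x u) (A.oplus x v) := by
  obtain ⟨w, hw, hwe⟩ := h
  have hx : A.D x (A.oplus u w) := by rw [hwe]; exact hv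
  obtain ⟨h1, h2, h3⟩ := A.assoc' x u w hw hx
  exact ⟨h1, ⟨w, h2, by rw [h3, hwe]⟩⟩

lemma oplus_le_oplus {x y u v : E} (hx : A.le x u) (hy : A.le y v) (h : A.D u v) :
    A.D x y ∧ A.le (A.oplus x y) (A.oplus u v) := by
  have hxv : A.D x v := D_of_le_le hx (A.le_refl v) h
  obtain ⟨hxy, h2⟩ := oplus_le_oplus_right hy hxv
  refine ⟨hxy, le_trans h2 ?_⟩
  obtain ⟨hvx, h4⟩ := oplus_le_oplus_right hx (A.D_comm _ _ h)
  rw [A.oplus_comm _ _ hvx, A.oplus_comm _ _ (A.D_comm _ _ h)] at h4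
  exact h4

lemma oplus_le_cancel_right {x y u : E} (hx : A.D x u) (hy : A.D y u)
    (h : A.le (A.oplus x u) (A.oplus y u)) : A.le x y := by
  rw [A.oplus_comm _ _ hx, A.oplus_comm _ _ hy] at h
  exact oplus_le_cancel_left (A.D_comm _ _ hx) (A.D_comm _ _ hy) h

end EffectAlgebra
namespace EffectAlgebra

variable {E : Type u} {A : EffectAlgebra E}

lemma sumdef_nil_inv {s : E} (h : A.SumDef [] s) : s = A.zero := by cases h; rfl

lemma sumdef_cons_inv {x : E} {l : List E} {s : E} (h : A.SumDef (x :: l) s) :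
    ∃ t, A.SumDef l t ∧ A.D x t ∧ s = A.oplus x t := by
  cases h with
  | cons ht hd => exact ⟨_, ht, hd, rfl⟩

lemma sumdef_unique {l : List E} {s t : E} (hs : A.SumDef l s) (ht : A.SumDef l t) : s = t := by
  induction l generalizing s t with
  | nil => rw [sumdef_nil_inv hs, sumdef_nil_inv ht]
  | cons x l ih =>
    obtain ⟨s', hs', _, rfl⟩ := sumdef_cons_inv hs
    obtain ⟨t', ht', _, rfl⟩ := sumdef_cons_inv ht
    rw [ih hs' ht']

lemma sumdef_perm {l l' : List E} (hp : l.Perm l') {s : E} (h : A.SumDef l s) :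
    A.SumDef l' s := by
  induction hp generalizing s with
  | nil => exact h
  | cons x p ih =>
    obtain ⟨t, ht, hd, rfl⟩ := sumdef_cons_inv h
    exact SumDef.cons (ih ht) hd
  | swap x y l =>
    obtain ⟨t, ht, hdy, rfl⟩ := sumdef_cons_inv h
    obtain ⟨u, hu, hdx, rfl⟩ := sumdef_cons_inv ht
    obtain ⟨h1, h2, h3⟩ := A.assoc' y x u hdx hdy
    rw [← h3, A.oplus_comm _ _ h1]
    have h2' : A.D (A.oplus x y) u := by
      rw [A.oplus_comm _ _ (A.D_comm _ _ h1)]; exact h2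
    obtain ⟨g1, g2, g3⟩ := A.assoc x y u (A.D_comm _ _ h1) h2'
    rw [g3]
    exact SumDef.cons (SumDef.cons hu g1) g2
  | trans p q ih1 ih2 => exact ih2 (ih1 h)

lemma sumdef_append {l1 l2 : List E} {s1 s2 : E} (h1 : A.SumDef l1 s1) (h2 : A.SumDef l2 s2)
    (hd : A.D s1 s2) : A.SumDef (l1 ++ l2) (A.oplus s1 s2) := by
  induction l1 generalizing s1 with
  | nil => rw [sumdef_nil_inv h1] at hd ⊢; rw [A.zero_oplus]; exact h2
  | cons x l ih =>
    obtain ⟨t, ht, hdx, rfl⟩ := sumdef_cons_inv h1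
    obtain ⟨g1, g2, g3⟩ := A.assoc x t s2 hdx hd
    rw [g3]
    exact SumDef.cons (ih ht g1) g2

lemma sumdef_append_inv {l1 l2 : List E} {s : E} (h : A.SumDef (l1 ++ l2) s) :
    ∃ s1 s2, A.SumDef l1 s1 ∧ A.SumDef l2 s2 ∧ A.D s1 s2 ∧ s = A.oplus s1 s2 := by
  induction l1 generalizing s with
  | nil =>
    exact ⟨A.zero, s, SumDef.nil, h, A.D_zero' s, (A.zero_oplus s).symm⟩
  | cons x l ih =>
    obtain ⟨t, ht, hdx, rfl⟩ := sumdef_cons_inv h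
    obtain ⟨s1, s2, g1, g2, g3, rfl⟩ := ih ht
    obtain ⟨k1, k2, k3⟩ := A.assoc' x s1 s2 g3 hdx
    exact ⟨A.oplus x s1, s2, SumDef.cons g1 k1, g2, k2, k3.symm⟩

lemma sumdef_mem_le {l : List E} {s x : E} (h : A.SumDef l s) (hx : x ∈ l) : A.le x s := by
  letI := Classical.decEq E
  have hp : l.Perm (x :: l.erase x) := List.perm_cons_erase hx
  obtain ⟨t, _, hd, rfl⟩ := sumdef_cons_inv (sumdef_perm hp h)
  exact le_oplus_left hd

/-- pointwise domination of sums -/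
lemma sumdef_mono {l1 l2 : List E} (hf : List.Forall₂ A.le l1 l2) {s2 : E} (h2 : A.SumDef l2 s2) :
    ∃ s1, A.SumDef l1 s1 ∧ A.le s1 s2 := by
  induction hf generalizing s2 with
  | nil => exact ⟨A.zero, SumDef.nil, by rw [sumdef_nil_inv h2]; exact A.le_refl _⟩
  | cons hxy hl ih =>
    obtain ⟨t2, ht2, hd2, rfl⟩ := sumdef_cons_inv h2
    obtain ⟨t1, ht1, hle⟩ := ih ht2
    obtain ⟨hd1, hle1⟩ := oplus_le_oplus hxy hle hd2
    exact ⟨_, SumDef.cons ht1 hd1, hle1⟩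

lemma sumdef_zero_cons {l : List E} {s : E} (h : A.SumDef l s) : A.SumDef (A.zero :: l) s := by
  have := SumDef.cons h (A.D_zero' s)
  rwa [A.zero_oplus] at this

lemma sumdef_zero_cons_inv {l : List E} {s : E} (h : A.SumDef (A.zero :: l) s) : A.SumDef l s := by
  obtain ⟨t, ht, _, rfl⟩ := sumdef_cons_inv h
  rwa [A.zero_oplus]

/-- replicate sums: monotone in the count -/
lemma sumdef_replicate_le {a : E} {k n : ℕ} (hkn : k ≤ n) {s : E}
    (h : A.SumDef (List.replicate n a) s) :
    ∃ t r, A.SumDef (List.replicate k a) t ∧ A.SumDef (List.replicate (n - k) a) r ∧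
      A.D t r ∧ s = A.oplus t r := by
  have : List.replicate n a = List.replicate k a ++ List.replicate (n - k) a := by
    rw [← List.replicate_add]; congr 1; omega
  rw [this] at h
  exact sumdef_append_inv h

lemma nTimesDef_mono {a : E} {k n : ℕ} (hkn : k ≤ n) (h : A.nTimesDef n a) :
    A.nTimesDef k a := by
  obtain ⟨s, hs⟩ := h
  obtain ⟨t, r, ht, _, _, _⟩ := sumdef_replicate_le hkn hs
  exact ⟨t, ht⟩

lemma replicate_le_replicate {a : E} {k n : ℕ} (hkn : k ≤ n) {t s : E}
    (ht : A.SumDef (List.replicate k a) t) (hs : A.SumDef (List.replicate n a) s) :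
    A.le t s := by
  obtain ⟨t', r, ht', hr, hd, rfl⟩ := sumdef_replicate_le hkn hs
  rw [sumdef_unique ht ht']
  exact le_oplus_left hd

lemma replicate_le_count {a : E} (ha : a ≠ A.zero) {k n : ℕ} {t s : E}
    (ht : A.SumDef (List.replicate k a) t) (hs : A.SumDef (List.replicate n a) s)
    (hle : A.le t s) : k ≤ n := by
  by_contra hlt
  push_neg at hlt
  obtain ⟨s', r, hs', hr, hd, rfl⟩ := sumdef_replicate_le (Nat.le_of_lt hlt) ht
  have heq : s' = s := sumdef_unique hs' hs
  rw [heq] at hd hle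
  have hr0 : r = A.zero := by
    have : A.le (A.oplus s r) (A.oplus s A.zero) := by rwa [A.oplus_zero]
    exact le_zero (oplus_le_cancel_left hd (A.D_zero s) this)
  have : k - n ≠ 0 := by omega
  obtain ⟨m, hm⟩ := Nat.exists_eq_succ_of_ne_zero this
  rw [hm, List.replicate_succ] at hr
  obtain ⟨w, hw1, hdw, hweq⟩ := sumdef_cons_inv hr
  rw [hr0] at hweq
  exact ha (oplus_eq_zero hdw hweq.symm).1

end EffectAlgebra
namespace EffectAlgebra

variable {E : Type u} {A : EffectAlgebra E}

lemma sumdef_singleton (z : E) : A.SumDef [z] z := by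
  have := SumDef.cons (A := A) SumDef.nil (A.D_zero z)
  rwa [A.oplus_zero] at this

lemma sumdef_sublist {l' l : List E} (h : l'.Sublist l) {s : E} (hs : A.SumDef l s) :
    ∃ t, A.SumDef l' t ∧ A.le t s := by
  induction h generalizing s with
  | slnil => exact ⟨A.zero, SumDef.nil, A.zero_le s⟩
  | cons x h ih =>
    obtain ⟨r, hr, hd, rfl⟩ := sumdef_cons_inv hs
    obtain ⟨t, ht, hle⟩ := ih hr
    exact ⟨t, ht, le_trans hle (le_oplus_right hd)⟩
  | cons_cons x h ih =>
    obtain ⟨r, hr, hd, rfl⟩ := sumdef_cons_inv hs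
    obtain ⟨t, ht, hle⟩ := ih hr
    have hdt : A.D x t := D_of_le_le (A.le_refl x) hle hd
    exact ⟨A.oplus x t, SumDef.cons ht hdt, (oplus_le_oplus (A.le_refl x) hle hd).2⟩

end EffectAlgebra
namespace EffectAlgebra

variable {E : Type u} {A : EffectAlgebra E}

/-- `x ∧ y = 0` -/
def Meet0 (A : EffectAlgebra E) (x y : E) : Prop := A.IsInfIn Set.univ {x, y} A.zero

lemma mem_pair_left (x y : E) : x ∈ ({x, y} : Set E) := Set.mem_insert x {y}
lemma mem_pair_right (x y : E) : y ∈ ({x, y} : Set E) :=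
  Set.mem_insert_iff.mpr (Or.inr rfl)

lemma pair_forall {x y : E} {P : E → Prop} (h1 : P x) (h2 : P y) :
    ∀ w ∈ ({x, y} : Set E), P w := by
  intro w hw
  rcases Set.mem_insert_iff.mp hw with rfl | hw
  · exact h1
  · rw [Set.mem_singleton_iff] at hw; subst hw; exact h2

lemma meet0_intro {x y : E} (h : ∀ z, A.le z x → A.le z y → z = A.zero) : A.Meet0 x y := by
  refine ⟨trivial, ?_, ?_⟩
  · exact pair_forall (A.zero_le x) (A.zero_le y)
  · intro z _ hz
    have := h z (hz x (mem_pair_left x y)) (hz y (mem_pair_right x y))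
    rw [this]; exact A.le_refl _

lemma meet0_elim {x y : E} (h : A.Meet0 x y) {z : E} (h1 : A.le z x) (h2 : A.le z y) :
    z = A.zero := by
  exact le_zero (h.2.2 z trivial (pair_forall h1 h2))

lemma meet0_symm {x y : E} (h : A.Meet0 x y) : A.Meet0 y x :=
  meet0_intro fun z h1 h2 => meet0_elim h h2 h1

lemma meet0_mono {x y x' y' : E} (hx : A.le x' x) (hy : A.le y' y) (h : A.Meet0 x y) :
    A.Meet0 x' y' :=
  meet0_intro fun z h1 h2 => meet0_elim h (le_trans h1 hx) (le_trans h2 hy)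

lemma meet0_zero (y : E) : A.Meet0 A.zero y :=
  meet0_intro fun z h1 _ => le_zero h1

lemma inf_unique {S : Set E} {m m' : E} (h : A.IsInfIn Set.univ S m)
    (h' : A.IsInfIn Set.univ S m') : m = m' :=
  le_antisymm (h'.2.2 m trivial h.2.1) (h.2.2 m' trivial h'.2.1)

lemma sup_unique {S : Set E} {m m' : E} (h : A.IsSupIn Set.univ S m)
    (h' : A.IsSupIn Set.univ S m') : m = m' :=
  le_antisymm (h.2.2 m' trivial h'.2.1) (h'.2.2 m trivial h.2.1)

section MV

variable (hMV : A.MV)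
include hMV

/-- If `x ∧ y = 0` then `x ⊕ y` is defined and is the join of `x, y`. -/
lemma meet0_oplus {x y : E} (h : A.Meet0 x y) :
    A.D x y ∧ A.IsSupIn Set.univ {x, y} (A.oplus x y) := by
  obtain ⟨m, j, z, hm, hj, hdz, hze, hdx, hxe⟩ := hMV.2 x y
  have hm0 : m = A.zero := inf_unique hm h
  rw [hm0, A.zero_oplus] at hze
  subst hze
  refine ⟨hdx, ?_⟩
  rwa [hxe]

/-- If `z ≤ u ⊕ w` and `z ∧ u = 0` then `z ≤ w`. -/
lemma le_of_le_oplus {z u w : E} (hd : A.D u w) (h1 : A.le z (A.oplus u w))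
    (h2 : A.Meet0 z u) : A.le z w := by
  obtain ⟨hdz, hsup⟩ := meet0_oplus hMV h2
  have hub : A.IsUB {z, u} (A.oplus u w) :=
    pair_forall h1 (le_oplus_left hd)
  have hle : A.le (A.oplus z u) (A.oplus u w) := hsup.2.2 _ trivial hub
  rw [A.oplus_comm _ _ hdz] at hle
  exact oplus_le_cancel_left (A.D_comm _ _ hdz) hd hle

/-- meet-zero propagates along orthosums. -/
lemma meet0_sumdef {z : E} {l : List E} {s : E} (hl : ∀ y ∈ l, A.Meet0 z y)
    (hs : A.SumDef l s) : A.Meet0 z s := by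
  induction l generalizing s with
  | nil => rw [sumdef_nil_inv hs]; exact meet0_symm (meet0_zero z)
  | cons x t ih =>
    obtain ⟨r, hr, hd, rfl⟩ := sumdef_cons_inv hs
    have hzr : A.Meet0 z r := ih (fun y hy => hl y (List.mem_cons_of_mem x hy)) hr
    refine meet0_intro fun w h1 h2 => ?_
    have hwx : A.Meet0 w x := meet0_mono h1 (A.le_refl x) (hl x (List.mem_cons_self : x ∈ x :: t))
    have hwr : A.le w r := le_of_le_oplus hMV hd h2 hwx
    exact meet0_elim hzr h1 hwr

/-- Riesz decomposition. -/
lemma riesz {u x y : E} (hd : A.D x y) (h : A.le u (A.oplus x y)) :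
    ∃ m w, A.IsInfIn Set.univ {u, x} m ∧ A.D m w ∧ A.oplus m w = u ∧ A.le w y := by
  obtain ⟨m, j, z, hm, hj, hdz, hze, hdu, hue⟩ := hMV.2 u x
  have hjle : A.le j (A.oplus x y) := by
    exact hj.2.2 _ trivial (pair_forall h (le_oplus_left hd))
  -- x ⊕ y = (m ⊕ y) ⊕ z
  have hdxy : A.D (A.oplus m z) y := by rw [hze]; exact hd
  obtain ⟨g1, g2, g3⟩ := A.assoc m z y hdz hdxy
  have g2' : A.D m (A.oplus y z) := by rwa [A.oplus_comm _ _ g1] at g2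
  obtain ⟨k1, k2, k3⟩ := A.assoc' m y z (A.D_comm _ _ g1) g2'
  have hxy_eq : A.oplus x y = A.oplus (A.oplus m y) z := by
    rw [← hze, g3, A.oplus_comm _ _ g1, k3]
  rw [← hue, hxy_eq] at hjle
  have hule : A.le u (A.oplus m y) := oplus_le_cancel_right hdu k2 hjle
  have hmu : A.le m u := hm.2.1 u (mem_pair_left u x)
  obtain ⟨w, hdw, hwe⟩ := hmu
  refine ⟨m, w, hm, hdw, hwe, ?_⟩
  refine oplus_le_cancel_left hdw k1 ?_
  rw [hwe]; exact hule

/-- existence of sums for pairwise meet-zero families -/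
lemma sum_of_pairwise_meet0 {ι : Type v} {f : ι → E}
    (hf : ∀ a b, a ≠ b → A.Meet0 (f a) (f b)) :
    ∀ l : List ι, l.Nodup → ∃ s, A.SumDef (l.map f) s ∧
      ∀ b, b ∉ l → A.Meet0 (f b) s := by
  intro l hl
  induction l with
  | nil =>
    exact ⟨A.zero, SumDef.nil, fun b _ => meet0_symm (meet0_zero _)⟩
  | cons a t ih =>
    obtain ⟨s, hs, hms⟩ := ih (List.Nodup.of_cons hl)
    have hma : A.Meet0 (f a) s := hms a (List.Nodup.notMem hl)
    obtain ⟨hd, _⟩ := meet0_oplus hMV hma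
    refine ⟨A.oplus (f a) s, SumDef.cons hs hd, fun b hb => ?_⟩
    have hba : b ≠ a := fun h => hb (h ▸ (List.mem_cons_self : a ∈ a :: t))
    have h1 : A.Meet0 (f b) (f a) := hf b a hba
    have h2 : A.Meet0 (f b) s := hms b (fun h => hb (List.mem_cons_of_mem a h))
    refine meet0_intro fun w h3 h4 => ?_
    have : A.le w s := le_of_le_oplus hMV hd h4 (meet0_mono h3 (A.le_refl _) h1)
    exact meet0_elim h2 h3 this

end MV

end EffectAlgebra
namespace EffectAlgebra

variable {E : Type u} {A : EffectAlgebra E}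

section Atoms

variable (hMV : A.MV) (hAtomic : A.Atomic)

include hMV in
lemma meet0_atoms {a b : E} (ha : A.Atom a) (hb : A.Atom b) (hab : a ≠ b) : A.Meet0 a b := by
  refine meet0_intro fun z h1 h2 => ?_
  rcases ha.2 z h1 with rfl | rfl
  · rfl
  · rcases hb.2 z h2 with h | h
    · exact h
    · exact absurd h hab

include hMV hAtomic in
/-- an atom below a sum of copies of another atom `a` must be `a` -/
lemma atom_le_replicate {a b : E} (ha : A.Atom a) (hb : A.Atom b) {n : ℕ} {s : E}
    (hs : A.SumDef (List.replicate n a) s) (hle : A.le b s) : b = a := by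
  by_contra hab
  have h0 : A.Meet0 b s := by
    refine meet0_sumdef hMV (fun y hy => ?_) hs
    rw [List.eq_of_mem_replicate hy]
    exact meet0_atoms hMV hb ha hab
  exact hb.1 (meet0_elim h0 (A.le_refl b) hle)

include hMV hAtomic in
/-- Anything below a multiple of an atom is a multiple of that atom. -/
lemma le_replicate_eq {a : E} (ha : A.Atom a) {n : ℕ} {s : E}
    (hs : A.SumDef (List.replicate n a) s) {y : E} (hy : A.le y s) :
    ∃ k, k ≤ n ∧ A.SumDef (List.replicate k a) y := by
  induction n generalizing s y with
  | zero =>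
    rw [sumdef_nil_inv hs] at hy  -- replicate 0 = []
    have : y = A.zero := le_zero hy
    exact ⟨0, Nat.le_refl 0, by rw [this]; exact SumDef.nil⟩
  | succ n ih =>
    by_cases hy0 : y = A.zero
    · exact ⟨0, Nat.zero_le _, by rw [hy0]; exact SumDef.nil⟩
    · obtain ⟨b, hb, hble⟩ := hAtomic y hy0
      have hba : b = a := atom_le_replicate hMV hAtomic ha hb hs (le_trans hble hy)
      subst hba
      rw [List.replicate_succ] at hs
      obtain ⟨s', hs', hda, rfl⟩ := sumdef_cons_inv hs
      obtain ⟨y', hdy, hye⟩ := hble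
      have hy'le : A.le y' s' := by
        refine oplus_le_cancel_left hdy hda ?_
        rw [hye]; exact hy
      obtain ⟨k, hk, hky⟩ := ih hs' hy'le
      refine ⟨k + 1, Nat.succ_le_succ hk, ?_⟩
      rw [← hye, List.replicate_succ]
      exact SumDef.cons hky hdy

end Atoms

end EffectAlgebra
namespace EffectAlgebra

variable {E : Type u}

lemma master (A : EffectAlgebra E) (hMV : A.MV) (hAtomic : A.Atomic)
    (hSO : A.SharplyOrthocomplete)
    (ta : {a : E // A.Atom a} → E) (n : {a : E // A.Atom a} → ℕ)
    (hta : ∀ a, A.SumDef (List.replicate (n a) a.1) (ta a))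
    (hta2 : ∀ a, ¬ A.nTimesDef (n a + 1) a.1) :
    (∀ S : Set E, ∃ s, A.IsSupIn Set.univ S s) ∧
    ∃ φ : E → ∀ a : {a : E // A.Atom a}, {y : E // A.le y (ta a)},
      Function.Bijective φ ∧
      (∀ x a, A.IsInfIn Set.univ {x, ta a} (φ x a).1) ∧
      (∀ x y : E, A.D x y ↔
        ∀ a, A.D (φ x a).1 (φ y a).1 ∧
          A.le (A.oplus (φ x a).1 (φ y a).1) (ta a)) ∧
      (∀ x y : E, A.D x y →
        ∀ a, (φ (A.oplus x y) a).1 = A.oplus (φ x a).1 (φ y a).1) := by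
  classical
  -- meet function
  choose mt hmt using fun x y : E => (hMV.1 x y).1
  have mt_le1 : ∀ x y, A.le (mt x y) x := fun x y => (hmt x y).2.1 x (mem_pair_left x y)
  have mt_le2 : ∀ x y, A.le (mt x y) y := fun x y => (hmt x y).2.1 y (mem_pair_right x y)
  have mt_ge : ∀ x y z, A.le z x → A.le z y → A.le z (mt x y) :=
    fun x y z h1 h2 => (hmt x y).2.2 z trivial (pair_forall h1 h2)
  have hne : ∀ a b : {a : E // A.Atom a}, a ≠ b → a.1 ≠ b.1 := fun a b h he => h (Subtype.ext he)
  -- meets of distinct top-multiples vanish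
  have h_ta_meet0 : ∀ a b : {a : E // A.Atom a}, a ≠ b → A.Meet0 (ta a) (ta b) := by
    intro a b hab
    have h1 : A.Meet0 a.1 (ta b) := by
      refine meet0_sumdef hMV (fun y hy => ?_) (hta b)
      rw [List.eq_of_mem_replicate hy]
      exact meet0_atoms hMV a.2 b.2 (hne a b hab)
    refine meet0_symm (meet0_sumdef hMV (fun y hy => ?_) (hta a))
    rw [List.eq_of_mem_replicate hy]
    exact meet0_symm h1
  -- sharpness
  have h_sharp : ∀ a : {a : E // A.Atom a}, A.Sharp (ta a) := by
    intro a
    refine ⟨trivial, pair_forall (A.zero_le _) (A.zero_le _), ?_⟩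
    intro z _ hz
    have h1 : A.le z (ta a) := hz _ (mem_pair_left _ _)
    have h2 : A.le z (A.compl (ta a)) := hz _ (mem_pair_right _ _)
    by_cases hz0 : z = A.zero
    · rw [hz0]; exact A.le_refl _
    exfalso
    obtain ⟨b, hb, hble⟩ := hAtomic z hz0
    have hba : b = a.1 := atom_le_replicate hMV hAtomic a.2 hb (hta a) (le_trans hble h1)
    have hD : A.D (ta a) b := D_iff_le_compl.mpr (le_trans hble h2)
    subst hba
    refine hta2 a ⟨A.oplus a.1 (ta a), ?_⟩
    rw [List.replicate_succ]
    exact SumDef.cons (hta a) (A.D_comm _ _ hD)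
  -- components
  set c : E → {a : E // A.Atom a} → E := fun x a => mt x (ta a) with hcdef
  have hcinf : ∀ x (a : {a : E // A.Atom a}), A.IsInfIn Set.univ {x, ta a} (c x a) := fun x a => hmt x (ta a)
  have hcx : ∀ x (a : {a : E // A.Atom a}), A.le (c x a) x := fun x a => mt_le1 x (ta a)
  have hcta : ∀ x (a : {a : E // A.Atom a}), A.le (c x a) (ta a) := fun x a => mt_le2 x (ta a)
  have hcge : ∀ x (a : {a : E // A.Atom a}) z, A.le z x → A.le z (ta a) → A.le z (c x a) :=
    fun x a z h1 h2 => mt_ge x (ta a) z h1 h2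
  have hcmul : ∀ x (a : {a : E // A.Atom a}), ∃ k, k ≤ n a ∧ A.SumDef (List.replicate k a.1) (c x a) :=
    fun x a => le_replicate_eq hMV hAtomic a.2 (hta a) (hcta x a)
  -- orthogonality of dominated families
  have hdom_meet0 : ∀ (f : {a : E // A.Atom a} → E), (∀ a, A.le (f a) (ta a)) →
      ∀ a b : {a : E // A.Atom a}, a ≠ b → A.Meet0 (f a) (f b) :=
    fun f hf a b hab => meet0_mono (hf a) (hf b) (h_ta_meet0 a b hab)
  have hgood : ∀ f : {a : E // A.Atom a} → E, (∀ a, A.le (f a) (ta a)) → A.Orthogonal f := by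
    intro f hf l hl
    obtain ⟨s, hs, _⟩ := sum_of_pairwise_meet0 hMV (hdom_meet0 f hf) l hl
    exact ⟨s, hs⟩
  have hta_orth : A.Orthogonal ta := hgood ta (fun a => A.le_refl _)
  have hOS : ∀ f : {a : E // A.Atom a} → E, (∀ a, A.le (f a) (ta a)) → ∃ v, A.HasOrthoSum f v :=
    fun f hf => hSO {a : E // A.Atom a} f ta h_sharp hta_orth hf
  -- finite sums of components are below x
  have hsum_le : ∀ x (l : List {a : E // A.Atom a}), l.Nodup → ∀ s, A.SumDef (l.map (c x)) s → A.le s x := by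
    intro x l
    induction l with
    | nil => intro _ s hs; rw [sumdef_nil_inv hs]; exact A.zero_le x
    | cons a t ih =>
      intro hl s hs
      obtain ⟨r, hr, hd, rfl⟩ := sumdef_cons_inv hs
      have hrx : A.le r x := ih hl.of_cons r hr
      have hmr : A.Meet0 (c x a) r := by
        refine meet0_sumdef hMV (fun y hy => ?_) hr
        obtain ⟨b, hbt, rfl⟩ := List.mem_map.mp hy
        have hab : a ≠ b := fun h => List.Nodup.notMem hl (h ▸ hbt)
        exact meet0_mono (hcta x a) (hcta x b) (h_ta_meet0 a b hab)
      obtain ⟨_, hsup⟩ := meet0_oplus hMV hmr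
      exact hsup.2.2 x trivial (pair_forall (hcx x a) hrx)
  -- decomposition: every x is the orthosum of its components
  have hdec : ∀ x, A.HasOrthoSum (c x) x := by
    intro x
    obtain ⟨v, hov⟩ := hOS (c x) (hcta x)
    suffices hvx : v = x by rw [hvx] at hov; exact hov
    obtain ⟨horth, hsup⟩ := hov
    have hvx : A.le v x := by
      refine hsup.2.2 x trivial ?_
      rintro s ⟨l, hl, hs⟩
      exact hsum_le x l hl s hs
    obtain ⟨r, hdr, hre⟩ := hvx
    have hr0 : r = A.zero := by
      by_contra hr0
      obtain ⟨b, hb, hbr⟩ := hAtomic r hr0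
      have hsingle : c x ⟨b, hb⟩ ∈ A.finiteSums (c x) :=
        ⟨[⟨b, hb⟩], List.nodup_singleton _, by simpa using sumdef_singleton _⟩
      have hcv : A.le (c x ⟨b, hb⟩) v := hsup.2.1 _ hsingle
      obtain ⟨k, hkn, hks⟩ := hcmul x ⟨b, hb⟩
      have hDkb : A.D (c x ⟨b, hb⟩) b := D_of_le_le hcv hbr hdr
      have hDb : A.D b (c x ⟨b, hb⟩) := A.D_comm _ _ hDkb
      have hsk1 : A.SumDef (List.replicate (k + 1) b) (A.oplus b (c x ⟨b, hb⟩)) := by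
        rw [List.replicate_succ]
        exact SumDef.cons hks hDb
      have hk1n : k + 1 ≤ n ⟨b, hb⟩ := by
        rcases Nat.lt_or_ge k (n ⟨b, hb⟩) with h | h
        · omega
        · exfalso
          have hkn' : k = n ⟨b, hb⟩ := Nat.le_antisymm hkn h
          refine hta2 ⟨b, hb⟩ ⟨A.oplus b (c x ⟨b, hb⟩), ?_⟩
          rw [← hkn']
          exact hsk1
      have hle_ta : A.le (A.oplus b (c x ⟨b, hb⟩)) (ta ⟨b, hb⟩) :=
        replicate_le_replicate hk1n hsk1 (hta ⟨b, hb⟩)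
      have hle_x : A.le (A.oplus b (c x ⟨b, hb⟩)) x := by
        have h' := (oplus_le_oplus hcv hbr hdr).2
        rw [hre] at h'
        rwa [A.oplus_comm _ _ hDb]
      have hle_c : A.le (A.oplus b (c x ⟨b, hb⟩)) (c x ⟨b, hb⟩) :=
        hcge x ⟨b, hb⟩ _ hle_x hle_ta
      rw [A.oplus_comm _ _ hDb] at hle_c
      have : A.le (A.oplus (c x ⟨b, hb⟩) b) (A.oplus (c x ⟨b, hb⟩) A.zero) := by
        rwa [A.oplus_zero]
      exact hb.1 (le_zero (oplus_le_cancel_left hDkb (A.D_zero _) this))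
    rw [hr0, A.oplus_zero] at hre
    exact hre
  -- order characterization
  have hord1 : ∀ x y, A.le x y → ∀ a : {a : E // A.Atom a}, A.le (c x a) (c y a) :=
    fun x y h a => hcge y a _ (le_trans (hcx x a) h) (hcta x a)
  have hord2 : ∀ x y, (∀ a : {a : E // A.Atom a}, A.le (c x a) (c y a)) → A.le x y := by
    intro x y h
    refine (hdec x).2.2.2 y trivial ?_
    rintro s ⟨l, hl, hs⟩
    have hf2 : ∀ t : List {a : E // A.Atom a},
        List.Forall₂ A.le (t.map (c x)) (t.map (c y)) := by
      intro t
      induction t with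
      | nil => exact List.Forall₂.nil
      | cons a t ih => exact List.Forall₂.cons (h a) ih
    obtain ⟨ys, hys⟩ := hgood (c y) (hcta y) l hl
    obtain ⟨s1, hs1, hle⟩ := sumdef_mono (hf2 l) hys
    rw [sumdef_unique hs hs1]
    exact le_trans hle (hsum_le y l hl ys hys)
  -- orthosums of dominated families have prescribed components
  have hM2 : ∀ f : {a : E // A.Atom a} → E, (∀ a, A.le (f a) (ta a)) →
      ∃ v, A.HasOrthoSum f v ∧ ∀ b, A.IsInfIn Set.univ {v, ta b} (f b) := by
    intro f hf
    obtain ⟨v, hov⟩ := hOS f hf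
    refine ⟨v, hov, fun b => ?_⟩
    obtain ⟨horthf, hsupf⟩ := hov
    set g : {a : E // A.Atom a} → E := fun a => if a = b then A.zero else f a with hg
    have hgta : ∀ a, A.le (g a) (ta a) := by
      intro a
      by_cases hab : a = b
      · simp only [hg, if_pos hab]; exact A.zero_le _
      · simp only [hg, if_neg hab]; exact hf a
    have hmapfg : ∀ l : List {a : E // A.Atom a}, b ∉ l → l.map f = l.map g := by
      intro l hbl
      refine List.map_congr_left fun a ha => ?_
      have hab : a ≠ b := fun h => hbl (h ▸ ha)
      simp only [hg, if_neg hab]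
    obtain ⟨v', hov'⟩ := hOS g hgta
    obtain ⟨horthg, hsupg⟩ := hov'
    have hsle : ∀ s ∈ A.finiteSums g, A.le s (A.compl (ta b)) := by
      rintro s ⟨l, hl, hs⟩
      have hm : A.Meet0 (ta b) s := by
        refine meet0_sumdef hMV (fun y hy => ?_) hs
        obtain ⟨a, hal, rfl⟩ := List.mem_map.mp hy
        by_cases hab : a = b
        · simp only [hg, if_pos hab]; exact meet0_symm (meet0_zero _)
        · simp only [hg, if_neg hab]
          exact meet0_mono (A.le_refl _) (hf a) (h_ta_meet0 b a (fun h => hab h.symm))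
      exact D_iff_le_compl.mp (meet0_oplus hMV hm).1
    have hv'le : A.le v' (A.compl (ta b)) := hsupg.2.2 _ trivial hsle
    have hm0 : A.Meet0 v' (ta b) := by
      refine meet0_intro fun z h1 h2 => ?_
      exact le_zero ((h_sharp b).2.2 z trivial (pair_forall h2 (le_trans h1 hv'le)))
    have hDvb : A.D v' (ta b) := (meet0_oplus hMV (meet0_symm (meet0_symm hm0))).1
    have hD' : A.D v' (f b) := D_of_le_le (A.le_refl v') (hf b) hDvb
    set V := A.oplus v' (f b) with hV
    have hfb_mem : f b ∈ A.finiteSums f :=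
      ⟨[b], List.nodup_singleton _, by simpa using sumdef_singleton _⟩
    have hVub : A.IsUB (A.finiteSums f) V := by
      rintro s ⟨l, hl, hs⟩
      by_cases hbl : b ∈ l
      · have hp : l.Perm (b :: l.erase b) := List.perm_cons_erase hbl
        have hs' := sumdef_perm (hp.map f) hs
        rw [List.map_cons] at hs'
        obtain ⟨t, ht, hdt, rfl⟩ := sumdef_cons_inv hs'
        have hberase : b ∉ l.erase b := fun hmem =>
          ((List.Nodup.mem_erase_iff hl).mp hmem).1 rfl
        have ht' : A.SumDef ((l.erase b).map g) t := by
          rw [← hmapfg _ hberase]; exact ht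
        have htv : A.le t v' := hsupg.2.1 t ⟨l.erase b, hl.erase b, ht'⟩
        have step := (oplus_le_oplus (A.le_refl (f b)) htv (A.D_comm _ _ hD')).2
        rw [hV, A.oplus_comm _ _ hD']
        exact step
      · have hsv' : A.le s v' := hsupg.2.1 s ⟨l, hl, by rw [← hmapfg _ hbl]; exact hs⟩
        exact le_trans hsv' (le_oplus_left hD')
    have hVlub : ∀ w ∈ Set.univ, A.IsUB (A.finiteSums f) w → A.le V w := by
      intro w _ hw
      have hfbw : A.le (f b) w := hw _ hfb_mem
      obtain ⟨uu, hdu, hue⟩ := hfbw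
      have huu : ∀ s ∈ A.finiteSums g, A.le s uu := by
        rintro s ⟨l, hl, hs⟩
        obtain ⟨l', hl', hbl', hs'⟩ :
            ∃ l' : List {a : E // A.Atom a}, l'.Nodup ∧ b ∉ l' ∧ A.SumDef (l'.map f) s := by
          by_cases hbl : b ∈ l
          · have hberase : b ∉ l.erase b := fun hmem =>
              ((List.Nodup.mem_erase_iff hl).mp hmem).1 rfl
            refine ⟨l.erase b, hl.erase b, hberase, ?_⟩
            have hp := (List.perm_cons_erase hbl).map g
            have hs2 := sumdef_perm hp hs
            rw [List.map_cons] at hs2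
            have hgb : g b = A.zero := by simp [hg]
            rw [hgb] at hs2
            have hs3 := sumdef_zero_cons_inv hs2
            rwa [← hmapfg _ hberase] at hs3
          · exact ⟨l, hl, hbl, by rw [hmapfg _ hbl]; exact hs⟩
        obtain ⟨S, hS⟩ := hgood f hf (b :: l') (List.nodup_cons.mpr ⟨hbl', hl'⟩)
        rw [List.map_cons] at hS
        obtain ⟨t, ht, hdt, rfl⟩ := sumdef_cons_inv hS
        have hts : t = s := sumdef_unique ht hs'
        rw [hts] at hdt
        have hmem : A.oplus (f b) s ∈ A.finiteSums f :=
          ⟨b :: l', List.nodup_cons.mpr ⟨hbl', hl'⟩, by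
            rw [List.map_cons]; exact SumDef.cons hs' hdt⟩
        have hle2 := hw _ hmem
        rw [← hue] at hle2
        exact oplus_le_cancel_left hdt hdu hle2
      have hv'uu : A.le v' uu := hsupg.2.2 uu trivial huu
      have h2 := (oplus_le_oplus hv'uu (A.le_refl (f b)) (A.D_comm _ _ hdu)).2
      rw [hV]
      refine le_trans h2 ?_
      rw [A.oplus_comm _ _ (A.D_comm _ _ hdu), hue]
      exact A.le_refl w
    have hveq : v = V := sup_unique hsupf ⟨trivial, hVub, hVlub⟩
    refine ⟨trivial, pair_forall (hsupf.2.1 _ hfb_mem) (hf b), ?_⟩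
    intro z _ hz
    have h1 : A.le z v := hz _ (mem_pair_left _ _)
    have h2 : A.le z (ta b) := hz _ (mem_pair_right _ _)
    rw [hveq, hV] at h1
    refine le_of_le_oplus hMV hD' h1 (meet0_intro fun q hq1 hq2 => ?_)
    exact meet0_elim hm0 hq2 (le_trans hq1 h2)
  -- additivity of components
  have hadd : ∀ x y (hD : A.D x y) (a : {a : E // A.Atom a}),
      c (A.oplus x y) a = A.oplus (c x a) (c y a) := by
    intro x y hD a
    have hDc : A.D (c x a) (c y a) := D_of_le_le (hcx x a) (hcx y a) hD
    obtain ⟨k, hkn, hks⟩ := hcmul x a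
    obtain ⟨m, hmn, hms⟩ := hcmul y a
    have hkm : A.SumDef (List.replicate (k + m) a.1) (A.oplus (c x a) (c y a)) := by
      rw [List.replicate_add]
      exact sumdef_append hks hms hDc
    have hkmn : k + m ≤ n a := by
      by_contra hgt
      push_neg at hgt
      exact hta2 a (nTimesDef_mono (by omega) ⟨_, hkm⟩)
    have h1 : A.le (A.oplus (c x a) (c y a)) (A.oplus x y) :=
      (oplus_le_oplus (hcx x a) (hcx y a) hD).2
    have h2 : A.le (A.oplus (c x a) (c y a)) (ta a) :=
      replicate_le_replicate hkmn hkm (hta a)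
    have hge := hcge (A.oplus x y) a _ h1 h2
    refine le_antisymm ?_ hge
    obtain ⟨mm, w, hminf, hdmw, hmwe, hwy⟩ := riesz hMV hD (hcx (A.oplus x y) a)
    have hmm1 : A.le mm (c (A.oplus x y) a) := hminf.2.1 _ (mem_pair_left _ _)
    have hmm2 : A.le mm x := hminf.2.1 _ (mem_pair_right _ _)
    have hmmc : A.le mm (c x a) := hcge x a mm hmm2 (le_trans hmm1 (hcta _ a))
    have hw1 : A.le w (c (A.oplus x y) a) := by
      have := le_oplus_right hdmw
      rwa [hmwe] at this
    have hwc : A.le w (c y a) := hcge y a w hwy (le_trans hw1 (hcta _ a))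
    rw [← hmwe]
    exact (oplus_le_oplus hmmc hwc hDc).2
  -- D characterization
  have hDchar : ∀ x y, A.D x y ↔
      (∀ a : {a : E // A.Atom a}, A.D (c x a) (c y a) ∧ A.le (A.oplus (c x a) (c y a)) (ta a)) := by
    intro x y
    constructor
    · intro hD a
      refine ⟨D_of_le_le (hcx x a) (hcx y a) hD, ?_⟩
      rw [← hadd x y hD a]
      exact hcta _ a
    · intro h
      set hfm : {a : E // A.Atom a} → E := fun a => A.oplus (c x a) (c y a) with hfmdef
      have hfmta : ∀ a, A.le (hfm a) (ta a) := fun a => (h a).2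
      have hR : ∀ l : List {a : E // A.Atom a}, l.Nodup → ∀ sx sy,
          A.SumDef (l.map (c x)) sx → A.SumDef (l.map (c y)) sy →
          A.D sx sy ∧ A.SumDef (l.map hfm) (A.oplus sx sy) := by
        intro l
        induction l with
        | nil =>
          intro _ sx sy hsx hsy
          obtain rfl := sumdef_nil_inv hsx
          obtain rfl := sumdef_nil_inv hsy
          exact ⟨A.D_zero _, by rw [A.oplus_zero]; exact SumDef.nil⟩
        | cons a t ih =>
          intro hl sx sy hsx hsy
          rw [List.map_cons] at hsx hsy
          obtain ⟨tx, htx, hdx, rfl⟩ := sumdef_cons_inv hsx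
          obtain ⟨ty, hty, hdy, rfl⟩ := sumdef_cons_inv hsy
          obtain ⟨hdt, hsum_t⟩ := ih hl.of_cons tx ty htx hty
          obtain ⟨S, hS⟩ := hgood hfm hfmta (a :: t) hl
          rw [List.map_cons] at hS
          obtain ⟨T, hT, hdT, rfl⟩ := sumdef_cons_inv hS
          have hTeq : T = A.oplus tx ty := sumdef_unique hT hsum_t
          rw [hTeq] at hdT
          have h4 : A.SumDef [c x a, c y a, tx, ty] (A.oplus (hfm a) (A.oplus tx ty)) := by
            have s2 : A.SumDef [tx, ty] (A.oplus tx ty) := SumDef.cons (sumdef_singleton ty) hdt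
            have hdya : A.D (c y a) (A.oplus tx ty) :=
              D_of_le_le (le_oplus_right (h a).1) (A.le_refl _) hdT
            have s3 : A.SumDef [c y a, tx, ty] (A.oplus (c y a) (A.oplus tx ty)) :=
              SumDef.cons s2 hdya
            obtain ⟨g1, g2, g3⟩ := A.assoc (c x a) (c y a) (A.oplus tx ty) (h a).1 hdT
            show A.SumDef _ (A.oplus (A.oplus (c x a) (c y a)) (A.oplus tx ty))
            rw [g3]
            exact SumDef.cons s3 g2
          have h4' := sumdef_perm
            (List.Perm.cons (c x a) (List.Perm.swap tx (c y a) [ty])) h4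
          obtain ⟨s1, s2, hs1, hs2, hd12, heq⟩ :=
            sumdef_append_inv (l1 := [c x a, tx]) (l2 := [c y a, ty]) h4'
          have hs1' : A.SumDef [c x a, tx] (A.oplus (c x a) tx) :=
            SumDef.cons (sumdef_singleton tx) hdx
          have hs2' : A.SumDef [c y a, ty] (A.oplus (c y a) ty) :=
            SumDef.cons (sumdef_singleton ty) hdy
          rw [sumdef_unique hs1 hs1', sumdef_unique hs2 hs2'] at hd12 heq
          refine ⟨hd12, ?_⟩
          rw [List.map_cons, ← heq]
          exact SumDef.cons hsum_t hdT
      have hDFG : ∀ F : List {a : E // A.Atom a}, F.Nodup → ∀ sF,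
          A.SumDef (F.map (c x)) sF →
          ∀ G : List {a : E // A.Atom a}, G.Nodup → ∀ sG,
          A.SumDef (G.map (c y)) sG → A.D sF sG := by
        intro F hF sF hsF G hG sG hsG
        set L := (F ++ G).dedup with hL
        have hLn : L.Nodup := List.nodup_dedup _
        have hFL : F ⊆ L := fun a ha => List.mem_dedup.mpr (List.mem_append_left _ ha)
        have hGL : G ⊆ L := fun a ha => List.mem_dedup.mpr (List.mem_append_right _ ha)
        obtain ⟨sxL, hsxL⟩ := hgood (c x) (hcta x) L hLn
        obtain ⟨syL, hsyL⟩ := hgood (c y) (hcta y) L hLn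
        obtain ⟨hDL, _⟩ := hR L hLn sxL syL hsxL hsyL
        have hkey : ∀ (cc : {a : E // A.Atom a} → E) (F' : List {a : E // A.Atom a}),
            F' ⊆ L → F'.Nodup → ∀ sF' sL, A.SumDef (F'.map cc) sF' →
            A.SumDef (L.map cc) sL → A.le sF' sL := by
          intro cc F' hF'L hF' sF' sL hsF' hsL
          obtain ⟨l₀, hp, hsl⟩ := hF'.subperm hF'L
          obtain ⟨t, ht, hle⟩ := sumdef_sublist (hsl.map cc) hsL
          have ht' := sumdef_perm (hp.map cc) ht
          rw [sumdef_unique hsF' ht']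
          exact hle
        exact D_of_le_le (hkey (c x) F hFL hF sF sxL hsF hsxL)
          (hkey (c y) G hGL hG sG syL hsG hsyL) hDL
      have hxy : A.le x (A.compl y) := by
        refine (hdec x).2.2.2 (A.compl y) trivial ?_
        rintro sF ⟨F, hF, hsF⟩
        have hy : A.le y (A.compl sF) := by
          refine (hdec y).2.2.2 _ trivial ?_
          rintro sG ⟨G, hG, hsG⟩
          exact D_iff_le_compl.mp (hDFG F hF sF hsF G hG sG hsG)
        exact (le_compl_iff (A := A)).mp hy
      exact A.D_comm _ _ (D_iff_le_compl.mpr hxy)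
  -- all suprema exist
  have hsups : ∀ S : Set E, ∃ s, A.IsSupIn Set.univ S s := by
    intro S
    rcases Set.eq_empty_or_nonempty S with rfl | ⟨x₀, hx₀⟩
    · refine ⟨A.zero, trivial, ?_, fun z _ _ => A.zero_le z⟩
      rintro x hx
      exact absurd hx (Set.notMem_empty x)
    · have hKex : ∀ a : {a : E // A.Atom a}, ∃ K, K ≤ n a ∧
          (∃ x ∈ S, A.SumDef (List.replicate K a.1) (c x a)) ∧
          ∀ j, j ≤ n a → (∃ x ∈ S, A.SumDef (List.replicate j a.1) (c x a)) → j ≤ K := by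
        intro a
        set P : ℕ → Prop := fun k => ∃ x ∈ S, A.SumDef (List.replicate k a.1) (c x a) with hP
        haveI : DecidablePred P := Classical.decPred P
        obtain ⟨k₀, hk₀n, hk₀⟩ := hcmul x₀ a
        have hPk₀ : P k₀ := ⟨x₀, hx₀, hk₀⟩
        exact ⟨Nat.findGreatest P (n a), Nat.findGreatest_le _,
          Nat.findGreatest_spec hk₀n hPk₀, fun j hj hPj => Nat.le_findGreatest hj hPj⟩
      choose K hKn hKP hKmax using hKex
      choose xw hxwS hxws using hKP
      set g : {a : E // A.Atom a} → E := fun a => c (xw a) a with hgdef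
      have hgta : ∀ a, A.le (g a) (ta a) := fun a => hcta (xw a) a
      obtain ⟨v, hov, hinf⟩ := hM2 g hgta
      have hcv : ∀ a, c v a = g a := fun a => inf_unique (hcinf v a) (hinf a)
      refine ⟨v, trivial, ?_, ?_⟩
      · intro x hx
        refine hord2 x v fun a => ?_
        obtain ⟨k, hkn, hks⟩ := hcmul x a
        have hkK : k ≤ K a := hKmax a k hkn ⟨x, hx, hks⟩
        rw [hcv a]
        exact replicate_le_replicate hkK hks (hxws a)
      · intro z _ hz
        refine hord2 v z fun a => ?_
        rw [hcv a]
        exact hord1 (xw a) z (hz (xw a) (hxwS a)) a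
  refine ⟨hsups, fun x a => ⟨c x a, hcta x a⟩, ⟨?_, ?_⟩, fun x a => hcinf x a, ?_, ?_⟩
  · -- injective
    intro x y hxy
    have hc : ∀ a : {a : E // A.Atom a}, c x a = c y a := fun a => congrArg Subtype.val (congrFun hxy a)
    exact le_antisymm (hord2 x y fun a => (hc a) ▸ A.le_refl _)
      (hord2 y x fun a => (hc a) ▸ A.le_refl _)
  · -- surjective
    intro gg
    obtain ⟨v, _, hinf⟩ := hM2 (fun a => (gg a).1) (fun a => (gg a).2)
    refine ⟨v, funext fun a => Subtype.ext ?_⟩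
    exact inf_unique (hcinf v a) (hinf a)
  · -- D characterization
    intro x y
    exact hDchar x y
  · -- additivity
    intro x y hD a
    exact hadd x y hD a

end EffectAlgebra
/-- A sharply orthocomplete Archimedean atomic MV-effect algebra is a complete
lattice; indeed `x ↦ (x ∧ nₐa)ₐ` is an isomorphism of `E` onto the direct product
effect algebra `∏_{a ∈ A} [0, nₐa]` over the set of atoms, `nₐ = ord a`. -/
theorem stmt15 {E : Type u} (A : EffectAlgebra E) (hMV : A.MV)
    (hArch : A.IsArchimedean) (hAtomic : A.Atomic)
    (hSO : A.SharplyOrthocomplete) :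
    A.Complete ∧
    ∀ ta : {a : E // A.Atom a} → E,
      (∀ a, ∃ n : ℕ, A.SumDef (List.replicate n a.1) (ta a) ∧
          ¬ A.nTimesDef (n + 1) a.1) →
      ∃ φ : E → ∀ a : {a : E // A.Atom a}, {y : E // A.le y (ta a)},
        Function.Bijective φ ∧
        (∀ x a, A.IsInfIn Set.univ {x, ta a} (φ x a).1) ∧
        (∀ x y : E, A.D x y ↔
          ∀ a, A.D (φ x a).1 (φ y a).1 ∧
            A.le (A.oplus (φ x a).1 (φ y a).1) (ta a)) ∧
        (∀ x y : E, A.D x y →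
          ∀ a, (φ (A.oplus x y) a).1 = A.oplus (φ x a).1 (φ y a).1) := by
  classical
  have hord : ∀ a : {a : E // A.Atom a}, ∃ (nn : ℕ) (s : E),
      A.SumDef (List.replicate nn a.1) s ∧ ¬ A.nTimesDef (nn + 1) a.1 := by
    intro a
    have h0 : ∃ m, ¬ A.nTimesDef m a.1 := hArch a.1 a.2.1
    have hN := Nat.find_spec h0
    have hN0 : Nat.find h0 ≠ 0 := by
      intro h
      rw [h] at hN
      exact hN ⟨A.zero, EffectAlgebra.SumDef.nil⟩
    have hlt : Nat.find h0 - 1 < Nat.find h0 := by omega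
    have hmem := Nat.find_min h0 hlt
    rw [not_not] at hmem
    obtain ⟨s, hs⟩ := hmem
    refine ⟨Nat.find h0 - 1, s, hs, ?_⟩
    have heq : Nat.find h0 - 1 + 1 = Nat.find h0 := by omega
    rw [heq]
    exact hN
  choose n0 ta0 h1 h2 using hord
  obtain ⟨hsups, _⟩ := EffectAlgebra.master A hMV hAtomic hSO ta0 n0 h1 h2
  constructor
  · intro S
    refine ⟨hsups S, ?_⟩
    obtain ⟨j, hj⟩ := hsups (A.compl '' S)
    refine ⟨A.compl j, trivial, ?_, ?_⟩
    · intro x hx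
      have h3 : A.le (A.compl x) j := hj.2.1 _ ⟨x, hx, rfl⟩
      have h4 := EffectAlgebra.compl_le_compl h3
      rwa [A.compl_compl] at h4
    · intro z _ hz
      have hub : A.IsUB (A.compl '' S) (A.compl z) := by
        rintro w ⟨x, hx, rfl⟩
        exact EffectAlgebra.compl_le_compl (hz x hx)
      have h5 : A.le j (A.compl z) := hj.2.2 _ trivial hub
      exact (EffectAlgebra.le_compl_iff (A := A)).mp h5
  · intro ta hta'
    choose nn hn1 hn2 using hta'
    obtain ⟨_, φ, hφ⟩ := EffectAlgebra.master A hMV hAtomic hSO ta nn hn1 hn2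
    exact ⟨φ, hφ⟩
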